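/- Critical points in a conformal class: on a compact Riemannian manifold of dimension n > 2k, the derivative of the total Gauss-Bonnet functional H_{2k} in a conformal direction f·g is H_{2k}'(fg) = (n-2k)∫_M f·h_{2k} dμ_g; consequently g is critical for H_{2k} restricted to volume-preserving pointwise conformal variations if and only if h_{2k} is constant. -/

import Mathlib

open scoped BigOperators
open scoped Classical

noncomputable section

/-- A `(p,q)`-double form on `ℝⁿ`, given by its components with respect to the
standard orthonormal basis: a scalar-valued function of a row multi-index and a
column multi-index. -/
def DForm (n p q : ℕ) : Type := (Fin p → Fin n) → (Fin q → Fin n) → ℝ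

namespace DForm

variable {n : ℕ}

/-- Transport a double form along equalities of the bidegrees. -/
def cast' {p q p' q' : ℕ} (hp : p = p') (hq : q = q') (ω : DForm n p q) :
    DForm n p' q' :=
  fun I J => ω (fun a => I (Fin.cast hp a)) (fun b => J (Fin.cast hq b))

/-- A double form is alternating in each of its two blocks of arguments. -/
def IsAlt {p q : ℕ} (ω : DForm n p q) : Prop :=
  (∀ (σ : Equiv.Perm (Fin p)) (I : Fin p → Fin n) (J : Fin q → Fin n),
      ω (I ∘ σ) J = ((Equiv.Perm.sign σ : ℤ) : ℝ) * ω I J) ∧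
  (∀ (τ : Equiv.Perm (Fin q)) (I : Fin p → Fin n) (J : Fin q → Fin n),
      ω I (J ∘ τ) = ((Equiv.Perm.sign τ : ℤ) : ℝ) * ω I J) ∧
  (∀ (I : Fin p → Fin n) (J : Fin q → Fin n),
      (¬ Function.Injective I ∨ ¬ Function.Injective J) → ω I J = 0)

/-- A `(p,p)`-double form is symmetric. -/
def IsSym {p : ℕ} (ω : DForm n p p) : Prop := ∀ I J, ω I J = ω J I

/-- The exterior (Kulkarni–Nomizu type) product of double forms:
`(α₁⊗β₁)·(α₂⊗β₂) = (α₁∧α₂)⊗(β₁∧β₂)` in components. -/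
def mul {p q r s : ℕ} (ω : DForm n p q) (θ : DForm n r s) :
    DForm n (p + r) (q + s) :=
  fun I J =>
    (((p.factorial * r.factorial * q.factorial * s.factorial : ℕ) : ℝ))⁻¹ *
      ∑ σ : Equiv.Perm (Fin (p + r)), ∑ τ : Equiv.Perm (Fin (q + s)),
        ((Equiv.Perm.sign σ : ℤ) : ℝ) * ((Equiv.Perm.sign τ : ℤ) : ℝ) *
          ω (fun a => I (σ (Fin.castAdd r a))) (fun b => J (τ (Fin.castAdd s b))) *
          θ (fun a => I (σ (Fin.natAdd p a))) (fun b => J (τ (Fin.natAdd q b)))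

/-- The contraction map `c : D^{p+1,q+1} → D^{p,q}` (trace over the orthonormal
basis in the first slot of each block). -/
def contr {p q : ℕ} (ω : DForm n (p + 1) (q + 1)) : DForm n p q :=
  fun I J => ∑ i : Fin n, ω (Fin.cons i I) (Fin.cons i J)

/-- Total version of the contraction (zero when a bidegree is `0`). -/
def contr' : {p q : ℕ} → DForm n p q → DForm n (p - 1) (q - 1)
  | _ + 1, _ + 1, ω => contr ω
  | 0, _, _ => fun _ _ => 0
  | _ + 1, 0, _ => fun _ _ => 0

/-- Iterated contraction `c^k : D^{p+k,q+k} → D^{p,q}`. -/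
def cIter {p q : ℕ} : (k : ℕ) → DForm n (p + k) (q + k) → DForm n p q
  | 0, ω => ω
  | k + 1, ω => cIter k (contr ω)

/-- The full contraction `c^p` of a `(p,p)`-double form, a scalar. -/
def fullc {p : ℕ} (ω : DForm n p p) : ℝ :=
  cIter (p := 0) (q := 0) p
    (cast' (Nat.zero_add p).symm (Nat.zero_add p).symm ω) Fin.elim0 Fin.elim0

/-- The metric of `ℝⁿ` as a `(1,1)`-double form. -/
def gd : DForm n 1 1 := fun I J => if I 0 = J 0 then 1 else 0

/-- Powers `g^p` of the metric in the ring of double forms. -/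
def gpow : (p : ℕ) → DForm n p p
  | 0 => fun _ _ => 1
  | p + 1 => mul (gpow p) gd

/-- Powers `ω^k` of a `(p,p)`-double form in the ring of double forms. -/
def pow {p : ℕ} (ω : DForm n p p) : (k : ℕ) → DForm n (p * k) (p * k)
  | 0 => fun _ _ => 1
  | k + 1 => mul (pow ω k) ω

/-- The natural pointwise inner product on `(p,q)`-double forms. -/
def innerPQ {p q : ℕ} (ω θ : DForm n p q) : ℝ :=
  (((p.factorial * q.factorial : ℕ) : ℝ))⁻¹ *
    ∑ I : Fin p → Fin n, ∑ J : Fin q → Fin n, ω I J * θ I J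

/-- The sign of the permutation of `{1,…,n}` obtained by concatenating the
multi-indices `K` and `I` (zero if it is not a permutation). -/
def epsSign {p : ℕ} (hp : p ≤ n) (K : Fin p → Fin n) (I : Fin (n - p) → Fin n) : ℝ :=
  if h : Function.Bijective
      (fun a : Fin n => Fin.append K I (Fin.cast (by omega) a)) then
    ((Equiv.Perm.sign (Equiv.ofBijective _ h) : ℤ) : ℝ)
  else 0

/-- The generalized Hodge star operator on double forms, acting as the usual
Hodge star on each factor. -/
def hstar {p q : ℕ} (hp : p ≤ n) (hq : q ≤ n) (ω : DForm n p q) :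
    DForm n (n - p) (n - q) :=
  fun I J =>
    (((p.factorial * q.factorial : ℕ) : ℝ))⁻¹ *
      ∑ K : Fin p → Fin n, ∑ L : Fin q → Fin n,
        epsSign hp K I * epsSign hq L J * ω K L

/-- The operator `F_h` associated with a symmetric bilinear form `h`:
in an orthonormal basis diagonalizing `h` it multiplies the `(I,J)` component by
the sum of the eigenvalues of `h` over the indices in `I` and `J`.
Coordinate-free version: insert the endomorphism of `h` in each slot. -/
def Fh {p q : ℕ} (h : Fin n → Fin n → ℝ) (ω : DForm n p q) : DForm n p q :=
  fun I J =>
    (∑ k : Fin p, ∑ i : Fin n, h (I k) i * ω (Function.update I k i) J) +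
    (∑ k : Fin q, ∑ i : Fin n, h (J k) i * ω I (Function.update J k i))

/-- A bilinear form on `ℝⁿ` viewed as a `(1,1)`-double form. -/
def ofBilin (h : Fin n → Fin n → ℝ) : DForm n 1 1 := fun I J => h (I 0) (J 0)

/-- The first Bianchi identity for a `(2,2)`-double form. -/
def Bianchi1 (R : DForm n 2 2) : Prop :=
  ∀ x y z u : Fin n,
    R ![x, y] ![z, u] + R ![y, z] ![x, u] + R ![z, x] ![y, u] = 0

end DForm

end

open MeasureTheory


noncomputable section AuxDF

namespace DFormAux

variable {n : ℕ}

def ext : (m : ℕ) → {p : ℕ} → (Fin m → Fin n) → (Fin p → Fin n) → (Fin (p + m) → Fin n)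
  | 0, _, _, I => I
  | m + 1, _, A, I => Fin.cons (α := fun _ => Fin n) (A 0) (ext m (A ∘ Fin.succ) I)

lemma ext_zero {p : ℕ} (A : Fin 0 → Fin n) (I : Fin p → Fin n) : ext 0 A I = I := rfl

lemma ext_succ (m : ℕ) {p : ℕ} (A : Fin (m + 1) → Fin n) (I : Fin p → Fin n) :
    ext (m + 1) A I = Fin.cons (α := fun _ => Fin n) (A 0) (ext m (A ∘ Fin.succ) I) := rfl

lemma ext_apply : ∀ (m : ℕ) {p : ℕ} (A : Fin m → Fin n) (I : Fin p → Fin n) (a : Fin (p + m)),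
    ext m A I a = if h : (a : ℕ) < m then A ⟨a, h⟩ else I ⟨(a : ℕ) - m, by omega⟩
  | 0, p, A, I, a => by
      rw [dif_neg (by omega)]
      rfl
  | m + 1, p, A, I, a => by
      rw [ext_succ]
      induction a using Fin.cases with
      | zero =>
          rw [Fin.cons_zero, dif_pos (by simp)]
          congr 1
      | succ b =>
          rw [Fin.cons_succ, ext_apply m]
          by_cases hb : (b : ℕ) < m
          · rw [dif_pos hb, dif_pos (by simp <;> omega)]
            show A (Fin.succ ⟨b, hb⟩) = _
            congr 1 <;> exact Fin.ext (by simp <;> omega)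
          · rw [dif_neg hb, dif_neg (by simp <;> omega)]
            congr 1 <;> exact Fin.ext (by simp <;> omega)

lemma cIter_formula : ∀ (m : ℕ) {p q : ℕ} (ω : DForm n (p + m) (q + m))
    (I : Fin p → Fin n) (J : Fin q → Fin n),
    DForm.cIter m ω I J = ∑ A : Fin m → Fin n, ω (ext m A I) (ext m A J)
  | 0, p, q, ω, I, J => by
      show ω I J = _
      rw [Fintype.sum_unique]
      rfl
  | m + 1, p, q, ω, I, J => by
      show DForm.cIter m (DForm.contr ω) I J = _
      rw [cIter_formula m]
      rw [← Equiv.sum_comp (Fin.consEquiv (fun _ : Fin (m + 1) => Fin n))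
            (fun B => ω (ext (m + 1) B I) (ext (m + 1) B J))]
      rw [Fintype.sum_prod_type]
      rw [Finset.sum_comm]
      refine Finset.sum_congr rfl fun A _ => ?_
      show (∑ i : Fin n, ω (Fin.cons (α := fun _ => Fin n) i (ext m A I))
          (Fin.cons (α := fun _ => Fin n) i (ext m A J))) = _
      refine Finset.sum_congr rfl fun i _ => ?_
      have h0 : (Fin.cons (α := fun _ => Fin n) i A) ∘ Fin.succ = A :=
        funext fun b => Fin.cons_succ (α := fun _ => Fin n) i A b
      have h1 : ∀ {r : ℕ} (K : Fin r → Fin n),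
          ext (m + 1) (Fin.consEquiv (fun _ : Fin (m + 1) => Fin n) (i, A)) K
            = Fin.cons (α := fun _ => Fin n) i (ext m A K) := by
        intro r K
        rw [show (Fin.consEquiv (fun _ : Fin (m + 1) => Fin n)) (i, A)
              = Fin.cons (α := fun _ => Fin n) i A from rfl]
        rw [ext_succ, Fin.cons_zero, h0]
      rw [h1, h1]

end DFormAux

end AuxDF

namespace DFormAux

variable {n : ℕ}

lemma sum_diag_fullc {m : ℕ} (ω : DForm n (m + 1) (m + 1)) :
    DForm.fullc ω = ∑ B : Fin (m + 1) → Fin n, ω B B := by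
  unfold DForm.fullc
  rw [cIter_formula]
  refine Finset.sum_congr rfl fun B _ => ?_
  show ω (fun a => ext (m + 1) B Fin.elim0 (Fin.cast _ a))
      (fun a => ext (m + 1) B Fin.elim0 (Fin.cast _ a)) = ω B B
  have hB : (fun a : Fin (m + 1) => ext (m + 1) B Fin.elim0
      (Fin.cast (Nat.zero_add (m + 1)).symm a)) = B := by
    funext a
    rw [ext_apply]
    rw [dif_pos (by have := a.isLt; simp <;> omega)]
    congr 1 <;> exact Fin.ext (by simp <;> omega)
  rw [hB]

lemma trace_eq_fullc {p : ℕ} (hp : 1 ≤ p) (h1 : p = 1 + (p - 1)) (ω : DForm n p p) :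
    ∑ i : Fin n, DForm.cIter (p := 1) (q := 1) (p - 1) (DForm.cast' h1 h1 ω)
      (fun _ => i) (fun _ => i) = DForm.fullc ω := by
  obtain ⟨m, rfl⟩ : ∃ m, p = m + 1 := ⟨p - 1, by omega⟩
  rw [sum_diag_fullc]
  have step1 : ∀ i : Fin n,
      DForm.cIter (p := 1) (q := 1) m (DForm.cast' h1 h1 ω) (fun _ => i) (fun _ => i)
        = ∑ A : Fin m → Fin n,
            ω (fun a => if h : (a : ℕ) < m then A ⟨a, h⟩ else i)
              (fun a => if h : (a : ℕ) < m then A ⟨a, h⟩ else i) := by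
    intro i
    rw [cIter_formula]
    refine Finset.sum_congr rfl fun A _ => ?_
    show ω (fun a => ext m A (fun _ => i) (Fin.cast h1 a))
        (fun a => ext m A (fun _ => i) (Fin.cast h1 a)) = _
    have hfun : (fun a : Fin (m + 1) => ext m A (fun _ : Fin 1 => i) (Fin.cast h1 a))
        = fun a : Fin (m + 1) => if h : (a : ℕ) < m then A ⟨a, h⟩ else i := by
      funext a
      rw [ext_apply]
      by_cases h : (a : ℕ) < m
      · rw [dif_pos (by simpa using h), dif_pos h]
        congr 1 <;> exact Fin.ext (by simp <;> omega)
      · rw [dif_neg (by simpa using h), dif_neg h]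
    rw [hfun]
  refine Eq.trans (Finset.sum_congr rfl fun i _ => step1 i) ?_
  have hbij : Function.Bijective
      (fun x : Fin n × (Fin m → Fin n) =>
        (fun a : Fin (m + 1) => if h : (a : ℕ) < m then x.2 ⟨a, h⟩ else x.1)) := by
    rw [Function.bijective_iff_has_inverse]
    refine ⟨fun B => (B (Fin.last m), fun b => B (Fin.castSucc b)), ?_, ?_⟩
    · rintro ⟨i, A⟩
      refine Prod.ext ?_ ?_
      · show (if h : ((Fin.last m : Fin (m + 1)) : ℕ) < m then A ⟨_, h⟩ else i) = i
        rw [dif_neg (by simp)]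
      · funext b
        show (if h : ((Fin.castSucc b : Fin (m + 1)) : ℕ) < m then A ⟨_, h⟩ else i) = A b
        rw [dif_pos (by simp)]
        congr 1 <;> exact Fin.ext (by simp <;> omega)
    · intro B
      funext a
      by_cases h : (a : ℕ) < m
      · show (if h : (a : ℕ) < m then B (Fin.castSucc ⟨a, h⟩) else B (Fin.last m)) = B a
        rw [dif_pos h]
        congr 1 <;> exact Fin.ext (by simp <;> omega)
      · show (if h : (a : ℕ) < m then B (Fin.castSucc ⟨a, h⟩) else B (Fin.last m)) = B a
        rw [dif_neg h]
        congr 1 <;> exact Fin.ext (by simp <;> omega)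
  exact Eq.trans
    (Fintype.sum_prod_type (f := fun x : Fin n × (Fin m → Fin n) =>
      ω (fun a : Fin (m + 1) => if h : (a : ℕ) < m then x.2 ⟨a, h⟩ else x.1)
        (fun a : Fin (m + 1) => if h : (a : ℕ) < m then x.2 ⟨a, h⟩ else x.1))).symm
    (Fintype.sum_bijective _ hbij _ _ (fun x => rfl))

end DFormAux


/-- critical points in a conformal class: on a compact manifold
`(M,μ_g)` of dimension `n > 2k`, the derivative of the total Gauss-Bonnet
functional `H_{2k}` in a conformal direction `f·g` is
`H_{2k}'(fg) = (n-2k)∫_M f·h_{2k} dμ_g`; pointwise the integrand is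
`⟨h_{2k}g - (1/(2k-1)!)c^{2k-1}R^k, f·g⟩ = (n-2k)·f·h_{2k}` (first conjunct).
Consequently `g` is critical for `H_{2k}` under volume-preserving pointwise
conformal variations (i.e. `H_{2k}'(fg) = 0` for all `f` with `∫ f dμ = 0`) if
and only if `h_{2k}` is constant (second conjunct, a.e. with respect to the
volume measure). -/
theorem conformal_critical_iff_constant_gauss_bonnet_curvature
    {n k : ℕ} (hk : 1 ≤ k) (hkn : 2 * k < n)
    {X : Type} [MeasurableSpace X] (μ : Measure X) [IsFiniteMeasure μ]
    (Rf : X → DForm n 2 2)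
    (halt : ∀ x, DForm.IsAlt (Rf x)) (hsym : ∀ x, DForm.IsSym (Rf x))
    (hb : ∀ x, DForm.Bianchi1 (Rf x))
    (h2k : X → ℝ)
    (hdef : ∀ x, h2k x = (((2 * k).factorial : ℝ))⁻¹ *
      DForm.fullc (DForm.pow (Rf x) k))
    (hint : Integrable h2k μ)
    (hint2 : Integrable (fun x => h2k x * h2k x) μ) :
    (∀ (f : X → ℝ) (x : X),
        DForm.innerPQ
          (fun I J => h2k x * DForm.gd I J -
            (((2 * k - 1).factorial : ℝ))⁻¹ *
              DForm.cIter (p := 1) (q := 1) (2 * k - 1)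
                (DForm.cast' (by omega) (by omega) (DForm.pow (Rf x) k)) I J)
          (fun I J => f x * DForm.gd I J) =
        ((n : ℝ) - 2 * k) * (f x * h2k x)) ∧
    ((∀ f : X → ℝ, Integrable f μ →
        Integrable (fun x => f x * h2k x) μ →
        ∫ x, f x ∂μ = 0 → ∫ x, f x * h2k x ∂μ = 0) ↔
      ∃ c : ℝ, ∀ᵐ x ∂μ, h2k x = c) := by
  constructor
  · intro f x
    have hne2 : (((2 * k).factorial : ℕ) : ℝ) ≠ 0 :=
      Nat.cast_ne_zero.mpr (Nat.factorial_ne_zero _)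
    have hne1 : (((2 * k - 1).factorial : ℕ) : ℝ) ≠ 0 :=
      Nat.cast_ne_zero.mpr (Nat.factorial_ne_zero _)
    have hfull : DForm.fullc (DForm.pow (Rf x) k) = (((2 * k).factorial : ℕ) : ℝ) * h2k x := by
      rw [hdef x, ← mul_assoc, mul_inv_cancel₀ hne2, one_mul]
    have key : (∑ i : Fin n, DForm.cIter (p := 1) (q := 1) (2 * k - 1)
          (DForm.cast' (by omega) (by omega) (DForm.pow (Rf x) k))
          (fun _ => i) (fun _ => i)) = (((2 * k).factorial : ℕ) : ℝ) * h2k x := by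
      rw [← hfull]
      exact DFormAux.trace_eq_fullc (by omega) (by omega) _
    have hfacN : (2 * k).factorial = (2 * k) * (2 * k - 1).factorial := by
      conv_lhs => rw [show 2 * k = (2 * k - 1) + 1 from by omega]
      rw [Nat.factorial_succ]
      congr 1
      omega
    have hfacR : (((2 * k).factorial : ℕ) : ℝ)
        = ((2 * k : ℕ) : ℝ) * (((2 * k - 1).factorial : ℕ) : ℝ) := by
      exact_mod_cast congrArg (fun t : ℕ => (t : ℝ)) hfacN
    simp only [DForm.innerPQ, DForm.gd, Nat.factorial_one, mul_one, Nat.cast_one,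
      inv_one, one_mul]
    have reix : ∀ F : (Fin 1 → Fin n) → ℝ,
        (∑ I : Fin 1 → Fin n, F I) = ∑ i : Fin n, F (fun _ => i) := by
      intro F
      exact (Fintype.sum_equiv (Equiv.funUnique (Fin 1) (Fin n)).symm
        (fun i => F (fun _ => i)) F (fun i => rfl)).symm
    simp only [reix]
    have collapse : ∀ (G : Fin n → Fin n → ℝ) (i : Fin n),
        (∑ j : Fin n, (h2k x * (if i = j then (1 : ℝ) else 0) - G i j) *
            (f x * (if i = j then (1 : ℝ) else 0)))
          = h2k x * f x - f x * G i i := by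
      intro G i
      rw [Finset.sum_eq_single i]
      · simp
        ring
      · intro j _ hj
        rw [if_neg (fun hh => hj hh.symm)]
        simp
      · intro hi
        exact absurd (Finset.mem_univ i) hi
    refine Eq.trans (Finset.sum_congr rfl fun i _ => collapse
      (fun i j => (((2 * k - 1).factorial : ℕ) : ℝ)⁻¹ *
        DForm.cIter (p := 1) (q := 1) (2 * k - 1)
          (DForm.cast' (by omega) (by omega) (DForm.pow (Rf x) k))
          (fun _ => i) (fun _ => j)) i) ?_
    rw [Finset.sum_sub_distrib, ← Finset.mul_sum, ← Finset.mul_sum, ← Finset.mul_sum, key,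
      Finset.sum_const, Finset.card_univ, Fintype.card_fin, nsmul_eq_mul, hfacR]
    push_cast
    field_simp
  · constructor
    · intro H
      by_cases hμ : μ Set.univ = 0
      · refine ⟨0, ?_⟩
        have h0 : μ = 0 := by
          ext s hs
          exact measure_mono_null (Set.subset_univ s) hμ
        simp [h0]
      · set c : ℝ := (∫ x, h2k x ∂μ) / (μ Set.univ).toReal with hc
        have htR : (μ Set.univ).toReal ≠ 0 := by
          simp [ENNReal.toReal_eq_zero_iff, hμ, (measure_lt_top μ _).ne]
        have hfi : Integrable (fun x => h2k x - c) μ := hint.sub (integrable_const c)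
        have hint0 : ∫ x, (h2k x - c) ∂μ = 0 := by
          rw [integral_sub hint (integrable_const c), integral_const, smul_eq_mul, hc]
          field_simp
          simp [Measure.real_def]
        have hprod : Integrable (fun x => (h2k x - c) * h2k x) μ := by
          have h' := hint2.sub (hint.const_mul c)
          have heq : (fun x => (h2k x - c) * h2k x)
              = fun x => h2k x * h2k x - c * h2k x := by
            funext y; ring
          rw [heq]
          exact h'
        have h1 : ∫ x, (h2k x - c) * h2k x ∂μ = 0 := H _ hfi hprod hint0
        have hsq : Integrable (fun x => (h2k x - c) * (h2k x - c)) μ := by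
          have h' := hprod.sub (hfi.mul_const c)
          have heq : (fun x => (h2k x - c) * (h2k x - c))
              = fun x => (h2k x - c) * h2k x - (h2k x - c) * c := by
            funext y; ring
          rw [heq]
          exact h'
        have h2 : ∫ x, (h2k x - c) * c ∂μ = 0 := by
          rw [integral_mul_const, hint0, zero_mul]
        have hsq0 : ∫ x, (h2k x - c) * (h2k x - c) ∂μ = 0 := by
          have heq : (fun x => (h2k x - c) * (h2k x - c))
              = fun x => (h2k x - c) * h2k x - (h2k x - c) * c := by
            funext y; ring
          rw [heq, integral_sub hprod (hfi.mul_const c), h1, h2, sub_zero]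
        have hae := (integral_eq_zero_iff_of_nonneg
          (fun y => mul_self_nonneg (h2k y - c)) hsq).mp hsq0
        refine ⟨c, ?_⟩
        filter_upwards [hae] with y hy
        have : (h2k y - c) * (h2k y - c) = 0 := hy
        have := mul_self_eq_zero.mp this
        linarith
    · rintro ⟨c, hc⟩ f hf hfh hf0
      have heq : ∫ x, f x * h2k x ∂μ = ∫ x, f x * c ∂μ :=
        integral_congr_ae (by filter_upwards [hc] with y hy; rw [hy])
      rw [heq, integral_mul_const, hf0, zero_mul]
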